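/- Let E be a single-crossing narcissistic election with voter order v_1, ..., v_n, and let Φ be a k-Monroe assignment. Suppose Φ(v_i) = c_s and Φ(v_j) = c_r with i < j, where c_s is the candidate in Φ(V) that v_1 ranks lowest and r ≠ s. Then the assignment Φ' obtained from Φ by swapping the candidates assigned to v_i and v_j (Φ'(v_i) = c_r, Φ'(v_j) = c_s, Φ' = Φ elsewhere) is a k-Monroe assignment with ℓ_∞(Φ') ≤ ℓ_∞(Φ). -/

import Mathlib

/-- Counting lemma: if every candidate beaten by `c` under `pv` is also beaten
by `c` under `pu`, then the position of `c` under `pv` is at most under `pu`. -/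
lemma pos_le_of_imp {m : ℕ} (pu pv : Fin m ≃ Fin m) (c : Fin m)
    (h : ∀ d, (pv d : ℕ) < pv c → (pu d : ℕ) < pu c) : (pv c : ℕ) ≤ pu c := by
  have hcard := Finset.card_le_card_of_injOn (f := fun x => pu (pv.symm x))
    (s := Finset.Iio (pv c)) (t := Finset.Iio (pu c))
    (by
      intro x hx
      simp only [Finset.mem_coe, Finset.mem_Iio] at hx ⊢
      have := h (pv.symm x) (by simpa using (show (x : ℕ) < pv c from hx))
      simpa using this)
    (by
      intro a _ b _ hab
      have : pv.symm a = pv.symm b := pu.injective hab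
      simpa using congrArg pv this)
  simpa using hcard

/-- Unimodality of positions around a voter `w` who ranks `c` first. -/
lemma pos_unimodal {m n : ℕ} (hn : 0 < n)
    (prefs : Fin n → (Fin m ≃ Fin m))
    (hsc : ∀ a b : Fin m, (prefs ⟨0, hn⟩ a : ℕ) < prefs ⟨0, hn⟩ b →
      ∃ t : ℕ, ∀ v : Fin n, ((prefs v a : ℕ) < prefs v b ↔ (v : ℕ) < t))
    (c : Fin m) (w : Fin n) (hw : (prefs w c : ℕ) = 0) :
    (∀ u v : Fin n, u ≤ v → (v : ℕ) ≤ w → (prefs v c : ℕ) ≤ prefs u c) ∧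
    (∀ u v : Fin n, (w : ℕ) ≤ u → u ≤ v → (prefs u c : ℕ) ≤ prefs v c) := by
  have hinj : ∀ (x : Fin n) (a b : Fin m), (prefs x a : ℕ) = prefs x b → a = b := by
    intro x a b h
    exact (prefs x).injective (Fin.val_injective h)
  have hwd : ∀ d : Fin m, d ≠ c → (prefs w c : ℕ) < prefs w d := by
    intro d hd
    rw [hw]
    rcases Nat.eq_zero_or_pos (prefs w d : ℕ) with h0 | h0
    · exact absurd (hinj w d c (h0.trans hw.symm)) hd
    · exact h0
  constructor
  · intro u v huv hvw
    apply pos_le_of_imp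
    intro d hd
    have hdc : d ≠ c := by
      intro h; rw [h] at hd; exact lt_irrefl _ hd
    rcases lt_trichotomy ((prefs ⟨0, hn⟩ d : ℕ)) ((prefs ⟨0, hn⟩ c : ℕ)) with h1 | h1 | h1
    · obtain ⟨t, ht⟩ := hsc d c h1
      have hv : (v : ℕ) < t := (ht v).mp hd
      exact (ht u).mpr (lt_of_le_of_lt (by exact_mod_cast huv) hv)
    · exact absurd (hinj _ _ _ h1) hdc
    · obtain ⟨t, ht⟩ := hsc c d h1
      have hwt : (w : ℕ) < t := (ht w).mp (hwd d hdc)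
      have : (prefs v c : ℕ) < prefs v d := (ht v).mpr (lt_of_le_of_lt hvw hwt)
      exact absurd hd (not_lt.mpr this.le)
  · intro u v hwu huv
    apply pos_le_of_imp
    intro d hd
    have hdc : d ≠ c := by
      intro h; rw [h] at hd; exact lt_irrefl _ hd
    rcases lt_trichotomy ((prefs ⟨0, hn⟩ d : ℕ)) ((prefs ⟨0, hn⟩ c : ℕ)) with h1 | h1 | h1
    · obtain ⟨t, ht⟩ := hsc d c h1
      have hu : (u : ℕ) < t := (ht u).mp hd
      have : (prefs w d : ℕ) < prefs w c := (ht w).mpr (lt_of_le_of_lt hwu hu)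
      exact absurd (hwd d hdc) (not_lt.mpr this.le)
    · exact absurd (hinj _ _ _ h1) hdc
    · obtain ⟨t, ht⟩ := hsc c d h1
      have hu : ¬ (u : ℕ) < t := fun h => absurd hd (not_lt.mpr ((ht u).mpr h).le)
      have hv : ¬ (prefs v c : ℕ) < prefs v d := by
        intro h
        exact hu (lt_of_le_of_lt (by exact_mod_cast huv) ((ht v).mp h))
      rcases lt_or_eq_of_le (not_lt.mp hv) with h | h
      · exact h
      · exact absurd (hinj _ _ _ h) hdc

/-- the swap lemma. In a single-crossing narcissistic election, if `Φ`
is a `k`-Monroe assignment, `Φ(v_i) = c_s`, `Φ(v_j) = c_r` with `i < j` and `r ≠ s`,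
and `c_s` is the candidate of `Φ(V)` ranked lowest by the first voter, then swapping
the candidates assigned to `v_i` and `v_j` yields a `k`-Monroe assignment with
egalitarian cost no larger than that of `Φ`. -/
theorem monroe_swap_lemma {m n k : ℕ} (hn : 0 < n)
    (prefs : Fin n → (Fin m ≃ Fin m))
    (hsc : ∀ a b : Fin m, (prefs ⟨0, hn⟩ a : ℕ) < prefs ⟨0, hn⟩ b →
      ∃ t : ℕ, ∀ v : Fin n, ((prefs v a : ℕ) < prefs v b ↔ (v : ℕ) < t))
    (hnarc : ∀ c : Fin m, ∃ v : Fin n, (prefs v c : ℕ) = 0)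
    (α : ℕ → ℕ) (hα : Monotone α) (hα1 : α 1 = 0)
    (Φ : Fin n → Fin m)
    (hM : (Finset.univ.image Φ).card = k ∧
      ∀ c : Fin m,
        (Finset.univ.filter (fun v => Φ v = c)).card = 0 ∨
        (n / k ≤ (Finset.univ.filter (fun v => Φ v = c)).card ∧
          (Finset.univ.filter (fun v => Φ v = c)).card ≤ (n + k - 1) / k))
    (i j : Fin n) (hij : i < j) (cs cr : Fin m)
    (hΦi : Φ i = cs) (hΦj : Φ j = cr) (hrs : cr ≠ cs)
    (hlow : ∀ c ∈ Finset.univ.image Φ, (prefs ⟨0, hn⟩ c : ℕ) ≤ prefs ⟨0, hn⟩ cs)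
    (Φ' : Fin n → Fin m)
    (hΦ' : Φ' = fun l => if l = i then cr else if l = j then cs else Φ l) :
    ((Finset.univ.image Φ').card = k ∧
      ∀ c : Fin m,
        (Finset.univ.filter (fun v => Φ' v = c)).card = 0 ∨
        (n / k ≤ (Finset.univ.filter (fun v => Φ' v = c)).card ∧
          (Finset.univ.filter (fun v => Φ' v = c)).card ≤ (n + k - 1) / k)) ∧
    (Finset.univ.sup fun v : Fin n => α ((prefs v (Φ' v) : ℕ) + 1)) ≤
      (Finset.univ.sup fun v : Fin n => α ((prefs v (Φ v) : ℕ) + 1)) := by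
  have hij' : i ≠ j := ne_of_lt hij
  -- Φ' is Φ composed with the swap of i and j
  have hcomp : Φ' = Φ ∘ ⇑(Equiv.swap i j) := by
    funext l
    rw [hΦ']
    by_cases hli : l = i
    · simp [hli, Equiv.swap_apply_left, hΦj]
    · by_cases hlj : l = j
      · simp [hlj, hij'.symm, Equiv.swap_apply_right, hΦi]
      · simp [hli, hlj, Equiv.swap_apply_of_ne_of_ne hli hlj]
  -- Monroe conditions are preserved
  have hMonroe : (Finset.univ.image Φ').card = k ∧
      ∀ c : Fin m,
        (Finset.univ.filter (fun v => Φ' v = c)).card = 0 ∨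
        (n / k ≤ (Finset.univ.filter (fun v => Φ' v = c)).card ∧
          (Finset.univ.filter (fun v => Φ' v = c)).card ≤ (n + k - 1) / k) := by
    have himg : Finset.univ.image Φ' = Finset.univ.image Φ := by
      rw [hcomp, ← Finset.image_image]
      congr 1
      simp
    have hfil : ∀ c : Fin m,
        (Finset.univ.filter (fun v => Φ' v = c)).card =
        (Finset.univ.filter (fun v => Φ v = c)).card := by
      intro c
      apply Finset.card_bij (fun v _ => Equiv.swap i j v)
      · intro a ha
        simp only [Finset.mem_filter, Finset.mem_univ, true_and] at ha ⊢
        rw [hcomp] at ha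
        exact ha
      · intro a _ b _ hab
        exact (Equiv.swap i j).injective hab
      · intro b hb
        simp only [Finset.mem_filter, Finset.mem_univ, true_and] at hb
        refine ⟨Equiv.swap i j b, ?_, ?_⟩
        · simp only [Finset.mem_filter, Finset.mem_univ, true_and, hcomp,
            Function.comp_apply, Equiv.swap_apply_self]
          exact hb
        · simp [Equiv.swap_apply_self]
    refine ⟨by rw [himg]; exact hM.1, fun c => by rw [hfil c]; exact hM.2 c⟩
  refine ⟨hMonroe, ?_⟩
  -- Cost analysis
  have hinj : ∀ (x : Fin n) (a b : Fin m), (prefs x a : ℕ) = prefs x b → a = b := by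
    intro x a b h
    exact (prefs x).injective (Fin.val_injective h)
  have hcrmem : cr ∈ Finset.univ.image Φ := by
    rw [← hΦj]; exact Finset.mem_image_of_mem Φ (Finset.mem_univ j)
  have hlt1 : (prefs ⟨0, hn⟩ cr : ℕ) < prefs ⟨0, hn⟩ cs := by
    rcases lt_or_eq_of_le (hlow cr hcrmem) with h | h
    · exact h
    · exact absurd (hinj _ _ _ h) hrs
  obtain ⟨t, ht⟩ := hsc cr cs hlt1
  obtain ⟨vs, hvs⟩ := hnarc cs
  obtain ⟨wr, hwr⟩ := hnarc cr
  -- t ≤ vs : voter vs ranks cs first, hence does not prefer cr to cs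
  have htvs : t ≤ (vs : ℕ) := by
    by_contra h
    have := (ht vs).mpr (not_le.mp h)
    rw [hvs] at this
    exact Nat.not_lt_zero _ this
  -- wr < t : voter wr ranks cr first, hence prefers cr to cs
  have hwrt : (wr : ℕ) < t := by
    apply (ht wr).mp
    rw [hwr]
    rcases Nat.eq_zero_or_pos (prefs wr cs : ℕ) with h0 | h0
    · exact absurd (hinj wr cs cr (h0.trans hwr.symm)) hrs.symm
    · exact h0
  -- the two key position bounds
  have hbound_i : (prefs i cr : ℕ) ≤ prefs i cs ∨ (prefs i cr : ℕ) ≤ prefs j cr := by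
    by_cases hi : (i : ℕ) < t
    · exact Or.inl ((ht i).mpr hi).le
    · right
      exact (pos_unimodal hn prefs hsc cr wr hwr).2 i j
        (le_trans hwrt.le (not_lt.mp hi)) hij.le
  have hbound_j : (prefs j cs : ℕ) ≤ prefs i cs ∨ (prefs j cs : ℕ) ≤ prefs j cr := by
    by_cases hj : (j : ℕ) < t
    · left
      exact (pos_unimodal hn prefs hsc cs vs hvs).1 i j hij.le (le_trans hj.le htvs)
    · right
      exact not_lt.mp (fun h => hj ((ht j).mp h))
  have hsup : ∀ u : Fin n, α ((prefs u (Φ u) : ℕ) + 1) ≤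
      (Finset.univ.sup fun v : Fin n => α ((prefs v (Φ v) : ℕ) + 1)) :=
    fun u => Finset.le_sup (f := fun v : Fin n => α ((prefs v (Φ v) : ℕ) + 1)) (Finset.mem_univ u)
  apply Finset.sup_le
  intro v _
  by_cases hvi : v = i
  · subst hvi
    rw [hΦ']
    simp only [if_pos rfl]
    rcases hbound_i with h | h
    · refine le_trans (hα (show (prefs v cr : ℕ) + 1 ≤ (prefs v (Φ v) : ℕ) + 1 by
        rw [hΦi]; omega)) (hsup v)
    · refine le_trans (hα (show (prefs v cr : ℕ) + 1 ≤ (prefs j (Φ j) : ℕ) + 1 by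
        rw [hΦj]; omega)) (hsup j)
  · by_cases hvj : v = j
    · subst hvj
      rw [hΦ']
      simp only [if_neg hvi, if_pos rfl]
      rcases hbound_j with h | h
      · refine le_trans (hα (show (prefs v cs : ℕ) + 1 ≤ (prefs i (Φ i) : ℕ) + 1 by
          rw [hΦi]; omega)) (hsup i)
      · refine le_trans (hα (show (prefs v cs : ℕ) + 1 ≤ (prefs v (Φ v) : ℕ) + 1 by
          rw [hΦj]; omega)) (hsup v)
    · rw [hΦ']
      simp only [if_neg hvi, if_neg hvj]
      exact hsup v
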